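/- arXiv:2007.13620 — 3 statements merged into one kernel-verified Lean document; each statement's English description precedes it below -/
import Mathlib

section
/- Let the group Circle of unit complex numbers act on the unit sphere S⁵ = {(v,w,z) ∈ ℂ³ : |v|²+|w|²+|z|² = 1} by s·(v,w,z) = (sv, sw, z). Then there is a homeomorphism Φ from the orbit space S⁵/Circle to the unit sphere S⁴ = {(a,h,c) ∈ ℂ×ℝ×ℂ : |a|²+h²+|c|² = 1} such that for all s ∈ Circle and all (v,w,z) ∈ S⁵, writing Φ([v,w,z]) = (a,h,c) for the image of the orbit of (v,w,z), one has Φ([sv, w, sz]) = (sa, h, sc) and Φ([sv, w, z]) = (sa, h, c). -/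
open Complex

noncomputable def hopfRaw (p : ℂ × ℂ × ℂ) : ℂ × ℝ × ℂ :=
  (2 * p.1 * (starRingEnd ℂ) p.2.1, ‖p.1‖ ^ 2 - ‖p.2.1‖ ^ 2,
    p.2.2 * ((Real.sqrt (2 - ‖p.2.2‖ ^ 2) : ℝ) : ℂ))

lemma hopfRaw_cont : Continuous hopfRaw := by
  apply Continuous.prodMk
  · exact (continuous_const.mul continuous_fst).mul (Complex.continuous_conj.comp (continuous_fst.comp continuous_snd))
  apply Continuous.prodMk
  · exact ((continuous_fst.norm.pow 2).sub ((continuous_fst.comp continuous_snd).norm.pow 2))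
  · exact (continuous_snd.comp continuous_snd).mul
      (Complex.continuous_ofReal.comp (Real.continuous_sqrt.comp
        (continuous_const.sub ((continuous_snd.comp continuous_snd).norm.pow 2))))

lemma norm_real_sqrt_sq (t : ℝ) (ht : 0 ≤ t) :
    ‖((Real.sqrt t : ℝ) : ℂ)‖ ^ 2 = t := by
  rw [Complex.norm_real, Real.norm_eq_abs, _root_.abs_of_nonneg (Real.sqrt_nonneg t), Real.sq_sqrt ht]

lemma hopfRaw_mem (p : ℂ × ℂ × ℂ) (hp : ‖p.1‖ ^ 2 + ‖p.2.1‖ ^ 2 + ‖p.2.2‖ ^ 2 = 1) :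
    ‖(hopfRaw p).1‖ ^ 2 + (hopfRaw p).2.1 ^ 2 + ‖(hopfRaw p).2.2‖ ^ 2 = 1 := by
  obtain ⟨v, w, z⟩ := p
  simp only [hopfRaw]
  have hz2 : ‖z‖ ^ 2 ≤ 1 := by nlinarith [sq_nonneg ‖v‖, sq_nonneg ‖w‖]
  have h1 : ‖2 * v * (starRingEnd ℂ) w‖ ^ 2 = 4 * (‖v‖ ^ 2 * ‖w‖ ^ 2) := by
    simp [norm_mul, RCLike.norm_conj, mul_pow]; ring
  have h2 : ‖z * ((Real.sqrt (2 - ‖z‖ ^ 2) : ℝ) : ℂ)‖ ^ 2 = ‖z‖ ^ 2 * (2 - ‖z‖ ^ 2) := by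
    rw [norm_mul, mul_pow, norm_real_sqrt_sq _ (by linarith)]
  simp only at *
  rw [h1, h2]
  nlinarith [sq_nonneg ‖v‖, sq_nonneg ‖w‖, sq_nonneg ‖z‖]



/-- The unit sphere `S⁵ ⊂ ℂ³`. -/
abbrev SphereC3 : Type := {p : ℂ × ℂ × ℂ // ‖p.1‖ ^ 2 + ‖p.2.1‖ ^ 2 + ‖p.2.2‖ ^ 2 = 1}

/-- The unit sphere `S⁴ ⊂ ℂ × ℝ × ℂ`. -/
abbrev SphereCRC : Type := {q : ℂ × ℝ × ℂ // ‖q.1‖ ^ 2 + q.2.1 ^ 2 + ‖q.2.2‖ ^ 2 = 1}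

/-- The defining `Circle`-action `s · (v, w, z) = (s v, s w, z)` on `S⁵`. -/
def actDiag (s : Circle) (x : SphereC3) : SphereC3 :=
  ⟨((s : ℂ) * x.val.1, (s : ℂ) * x.val.2.1, x.val.2.2), by
    have h := x.property; simpa [Circle.norm_coe] using h⟩

/-- The auxiliary action `s · (v, w, z) = (s v, w, s z)` on `S⁵`. -/
def actFirstThird (s : Circle) (x : SphereC3) : SphereC3 :=
  ⟨((s : ℂ) * x.val.1, x.val.2.1, (s : ℂ) * x.val.2.2), by
    have h := x.property; simpa [Circle.norm_coe] using h⟩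

/-- The auxiliary action `s · (v, w, z) = (s v, w, z)` on `S⁵`. -/
def actFirst (s : Circle) (x : SphereC3) : SphereC3 :=
  ⟨((s : ℂ) * x.val.1, x.val.2.1, x.val.2.2), by
    have h := x.property; simpa [Circle.norm_coe] using h⟩

/-- The orbit relation of the `Circle`-action `s · (v, w, z) = (s v, s w, z)` on `S⁵`. -/
def orbitRelS5 (x y : SphereC3) : Prop := ∃ s : Circle, actDiag s x = y

noncomputable def hopfMap (x : SphereC3) : SphereCRC :=
  ⟨hopfRaw x.val, hopfRaw_mem x.val x.property⟩

lemma hopfMap_cont : Continuous hopfMap :=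
  Continuous.subtype_mk (hopfRaw_cont.comp continuous_subtype_val) _

lemma norm_circle (s : Circle) : ‖(s : ℂ)‖ = 1 := by
  simpa using Circle.norm_coe s

lemma hopfMap_const (x y : SphereC3) (h : orbitRelS5 x y) : hopfMap x = hopfMap y := by
  obtain ⟨s, rfl⟩ := h
  obtain ⟨⟨v, w, z⟩, hx⟩ := x
  apply Subtype.ext
  simp only [hopfMap, hopfRaw, actDiag, map_mul]
  have hs : ‖(s : ℂ)‖ = 1 := norm_circle s
  have hsc : (s : ℂ) * (starRingEnd ℂ) (s : ℂ) = 1 := by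
    rw [Complex.mul_conj]; norm_cast; simp
  refine Prod.ext ?_ (Prod.ext ?_ rfl)
  · simp only
    calc 2 * v * (starRingEnd ℂ) w
        = ((s:ℂ) * (starRingEnd ℂ) (s:ℂ)) * (2 * v * (starRingEnd ℂ) w) := by rw [hsc]; ring
      _ = 2 * ((s:ℂ) * v) * ((starRingEnd ℂ) (s:ℂ) * (starRingEnd ℂ) w) := by ring
  · simp [norm_mul, hs]

lemma hopfMap_surj : Function.Surjective hopfMap := by
  rintro ⟨⟨a, h, c⟩, hq⟩
  simp only at hq
  set r : ℝ := Real.sqrt (‖a‖ ^ 2 + h ^ 2) with hr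
  have hr0 : 0 ≤ r := Real.sqrt_nonneg _
  have hr2 : r ^ 2 = ‖a‖ ^ 2 + h ^ 2 := Real.sq_sqrt (by positivity)
  have hr1 : r ≤ 1 := by nlinarith [sq_nonneg ‖c‖]
  have hhr : |h| ≤ r := by
    rw [abs_le]; constructor <;> nlinarith [sq_nonneg (r - h), sq_nonneg (r + h)]
  have h1r : (0:ℝ) < 1 + r := by linarith
  set z : ℂ := c / ((Real.sqrt (1 + r) : ℝ) : ℂ) with hzdef
  have hsne : ((Real.sqrt (1 + r) : ℝ) : ℂ) ≠ 0 := by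
    simpa using (Real.sqrt_ne_zero'.2 h1r)
  have hz2 : ‖z‖ ^ 2 = 1 - r := by
    rw [hzdef, norm_div, div_pow, norm_real_sqrt_sq _ (le_of_lt h1r)]
    have hc2 : ‖c‖ ^ 2 = 1 - r ^ 2 := by linarith
    rw [hc2]; field_simp; ring
  have hthird : z * ((Real.sqrt (2 - ‖z‖ ^ 2) : ℝ) : ℂ) = c := by
    rw [hz2]
    have : (2 : ℝ) - (1 - r) = 1 + r := by ring
    rw [this, hzdef, div_mul_cancel₀ _ hsne]
  by_cases hcase : 0 < r + h
  · set v : ℂ := ((Real.sqrt ((r + h) / 2) : ℝ) : ℂ) with hvdef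
    have hv2 : ‖v‖ ^ 2 = (r + h) / 2 := norm_real_sqrt_sq _ (by linarith)
    have hvne : v ≠ 0 := by
      simpa [hvdef] using (Real.sqrt_ne_zero'.2 (by linarith : (0:ℝ) < (r + h)/2))
    set w : ℂ := (starRingEnd ℂ) a / (2 * v) with hwdef
    have hw2 : ‖w‖ ^ 2 = (r - h) / 2 := by
      rw [hwdef, norm_div, div_pow, norm_mul, RCLike.norm_conj, mul_pow, hv2]
      have ha2 : ‖a‖ ^ 2 = r ^ 2 - h ^ 2 := by linarith
      rw [ha2, show ‖(2:ℂ)‖ = 2 by norm_num]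
      field_simp
      ring
    refine ⟨⟨(v, w, z), by simp only; rw [hv2, hw2, hz2]; ring⟩, ?_⟩
    apply Subtype.ext
    simp only [hopfMap, hopfRaw]
    refine Prod.ext ?_ (Prod.ext ?_ hthird)
    · simp only [hwdef, map_div₀, map_mul]
      rw [Complex.conj_conj]
      have hcv : (starRingEnd ℂ) v = v := by rw [hvdef, Complex.conj_ofReal]
      rw [hcv, map_ofNat]
      field_simp
    · simp only; rw [hv2, hw2]; linarith
  · have hh : h = -r := by
      rcases abs_le.1 hhr with ⟨h1, h2⟩; linarith
    have ha : a = 0 := by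
      have : ‖a‖ ^ 2 = 0 := by nlinarith
      have := pow_eq_zero_iff (n := 2) (by norm_num) |>.1 this
      simpa using this
    set w : ℂ := ((Real.sqrt r : ℝ) : ℂ) with hwdef
    have hw2 : ‖w‖ ^ 2 = r := norm_real_sqrt_sq _ hr0
    refine ⟨⟨((0:ℂ), w, z), by simp only; rw [hw2, hz2]; simp⟩, ?_⟩
    apply Subtype.ext
    simp only [hopfMap, hopfRaw]
    refine Prod.ext ?_ (Prod.ext ?_ hthird)
    · simp [ha]
    · simp only [hw2, norm_zero]; rw [ha] at hr2; simp at hr2; nlinarith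

lemma hopfMap_inj (x y : SphereC3) (h : hopfMap x = hopfMap y) : orbitRelS5 x y := by
  obtain ⟨⟨v, w, z⟩, hx⟩ := x
  obtain ⟨⟨v', w', z'⟩, hy⟩ := y
  simp only at hx hy
  have h' := congrArg Subtype.val h
  simp only [hopfMap, hopfRaw] at h'
  have h1 : 2 * v * (starRingEnd ℂ) w = 2 * v' * (starRingEnd ℂ) w' := congrArg Prod.fst h'
  have h2 : ‖v‖ ^ 2 - ‖w‖ ^ 2 = ‖v'‖ ^ 2 - ‖w'‖ ^ 2 := congrArg (fun p => p.2.1) h'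
  have h3 : z * ((Real.sqrt (2 - ‖z‖ ^ 2) : ℝ) : ℂ) = z' * ((Real.sqrt (2 - ‖z'‖ ^ 2) : ℝ) : ℂ) :=
    congrArg (fun p => p.2.2) h'
  -- norms of z
  have hz1 : ‖z‖ ^ 2 ≤ 1 := by nlinarith [sq_nonneg ‖v‖, sq_nonneg ‖w‖]
  have hz1' : ‖z'‖ ^ 2 ≤ 1 := by nlinarith [sq_nonneg ‖v'‖, sq_nonneg ‖w'‖]
  have hn3 : ‖z‖ ^ 2 * (2 - ‖z‖ ^ 2) = ‖z'‖ ^ 2 * (2 - ‖z'‖ ^ 2) := by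
    have := congrArg (fun u => ‖u‖ ^ 2) h3
    simpa [norm_mul, mul_pow, norm_real_sqrt_sq _ (by linarith : (0:ℝ) ≤ 2 - ‖z‖^2),
      norm_real_sqrt_sq _ (by linarith : (0:ℝ) ≤ 2 - ‖z'‖^2),
      Real.sq_sqrt (show (0:ℝ) ≤ 2 - ‖z‖ ^ 2 by
        linarith),
      Real.sq_sqrt (show (0:ℝ) ≤ 2 - ‖z'‖ ^ 2 by
        linarith)] using this
  have hzz : ‖z‖ ^ 2 = ‖z'‖ ^ 2 := by nlinarith [sq_nonneg (‖z‖^2 - ‖z'‖^2)]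
  have hzeq : z = z' := by
    rw [hzz] at h3
    have hpos : ((Real.sqrt (2 - ‖z'‖ ^ 2) : ℝ) : ℂ) ≠ 0 := by
      simpa using Real.sqrt_ne_zero'.2 (by linarith : (0:ℝ) < 2 - ‖z'‖^2)
    exact mul_right_cancel₀ hpos h3
  have hvv : ‖v‖ = ‖v'‖ := by
    have : ‖v‖ ^ 2 = ‖v'‖ ^ 2 := by nlinarith
    nlinarith [norm_nonneg v, norm_nonneg v']
  have hww : ‖w‖ = ‖w'‖ := by
    have : ‖w‖ ^ 2 = ‖w'‖ ^ 2 := by nlinarith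
    nlinarith [norm_nonneg w, norm_nonneg w']
  have hvw : v * (starRingEnd ℂ) w = v' * (starRingEnd ℂ) w' := by
    linear_combination h1 / 2
  by_cases hw : w = 0
  · have hw' : w' = 0 := by
      rw [← norm_eq_zero, ← hww, norm_eq_zero]; exact hw
    by_cases hv : v = 0
    · have hv' : v' = 0 := by
        rw [← norm_eq_zero, ← hvv, norm_eq_zero]; exact hv
      exact ⟨1, Subtype.ext (by simp [actDiag, hv, hv', hw, hw', hzeq])⟩
    · have hv' : v' ≠ 0 := by
        have : ‖v'‖ ≠ 0 := by rw [← hvv]; exact norm_ne_zero_iff.2 hv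
        exact norm_ne_zero_iff.1 this
      refine ⟨⟨v' / v, ?_⟩, ?_⟩
      · show v' / v ∈ Metric.sphere (0:ℂ) 1
        rw [mem_sphere_zero_iff_norm, norm_div, ← hvv, div_self]
        exact norm_ne_zero_iff.2 hv
      · apply Subtype.ext
        simp only [actDiag]
        refine Prod.ext ?_ (Prod.ext ?_ hzeq)
        · exact div_mul_cancel₀ v' hv
        · simp [hw, hw']
  · have hw' : w' ≠ 0 := by
      have : ‖w'‖ ≠ 0 := by rw [← hww]; exact norm_ne_zero_iff.2 hw
      exact norm_ne_zero_iff.1 this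
    have hcw : (starRingEnd ℂ) w ≠ 0 := by simpa using hw
    have hcw' : (starRingEnd ℂ) w' ≠ 0 := by simpa using hw'
    refine ⟨⟨w' / w, ?_⟩, ?_⟩
    · show w' / w ∈ Metric.sphere (0:ℂ) 1
      rw [mem_sphere_zero_iff_norm, norm_div, ← hww, div_self]
      exact norm_ne_zero_iff.2 hw
    · apply Subtype.ext
      simp only [actDiag]
      refine Prod.ext ?_ (Prod.ext (div_mul_cancel₀ w' hw) hzeq)
      -- need (w'/w) * v = v'
      have key : v * w' = v' * w := by
        -- from hvw: v * conj w = v' * conj w', norms equal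
        have hnorm : w * (starRingEnd ℂ) w = w' * (starRingEnd ℂ) w' := by
          have hns : Complex.normSq w = Complex.normSq w' := by
            rw [Complex.normSq_eq_norm_sq, Complex.normSq_eq_norm_sq,
              hww]
          rw [Complex.mul_conj, Complex.mul_conj, hns]
        have e1 : v * (starRingEnd ℂ) w * w' = v' * (starRingEnd ℂ) w' * w' := by rw [hvw]
        have e2 : v' * (starRingEnd ℂ) w' * w' = v' * (w * (starRingEnd ℂ) w) := by
          rw [hnorm]; ring
        have e3 : v * w' * (starRingEnd ℂ) w = v' * w * (starRingEnd ℂ) w := by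
          calc v * w' * (starRingEnd ℂ) w = v * (starRingEnd ℂ) w * w' := by ring
            _ = v' * (w * (starRingEnd ℂ) w) := e1.trans e2
            _ = v' * w * (starRingEnd ℂ) w := by ring
        exact mul_right_cancel₀ hcw e3
      field_simp
      linear_combination key

instance : CompactSpace SphereC3 := by
  apply isCompact_iff_compactSpace.mp
  have hclosed : IsClosed {p : ℂ × ℂ × ℂ | ‖p.1‖ ^ 2 + ‖p.2.1‖ ^ 2 + ‖p.2.2‖ ^ 2 = 1} := by
    apply isClosed_eq _ continuous_const
    fun_prop
  have hbdd : {p : ℂ × ℂ × ℂ | ‖p.1‖ ^ 2 + ‖p.2.1‖ ^ 2 + ‖p.2.2‖ ^ 2 = 1} ⊆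
      Metric.closedBall 0 1 := by
    rintro ⟨v, w, z⟩ hp
    simp only [Set.mem_setOf_eq] at hp
    rw [Metric.mem_closedBall, dist_zero_right]
    have h1 : ‖v‖ ≤ 1 := by nlinarith [norm_nonneg v, norm_nonneg w, norm_nonneg z]
    have h2 : ‖w‖ ≤ 1 := by nlinarith [norm_nonneg v, norm_nonneg w, norm_nonneg z]
    have h3 : ‖z‖ ≤ 1 := by nlinarith [norm_nonneg v, norm_nonneg w, norm_nonneg z]
    simp only [Prod.norm_def]
    exact max_le h1 (max_le h2 h3)
  · exact (Metric.isCompact_of_isClosed_isBounded hclosed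
      (Metric.isBounded_closedBall.subset hbdd))


lemma hopfMap_actFirstThird (s : Circle) (x : SphereC3) :
    (hopfMap (actFirstThird s x)).val =
      ((s : ℂ) * (hopfMap x).val.1, (hopfMap x).val.2.1, (s : ℂ) * (hopfMap x).val.2.2) := by
  obtain ⟨⟨v, w, z⟩, hx⟩ := x
  have hs : ‖(s : ℂ)‖ = 1 := norm_circle s
  simp only [hopfMap, actFirstThird, hopfRaw]
  refine Prod.ext (by ring) (Prod.ext (by simp [norm_mul, hs]) ?_)
  simp only [norm_mul, hs, one_mul]
  ring

lemma hopfMap_actFirst (s : Circle) (x : SphereC3) :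
    (hopfMap (actFirst s x)).val =
      ((s : ℂ) * (hopfMap x).val.1, (hopfMap x).val.2.1, (hopfMap x).val.2.2) := by
  obtain ⟨⟨v, w, z⟩, hx⟩ := x
  have hs : ‖(s : ℂ)‖ = 1 := norm_circle s
  simp only [hopfMap, actFirst, hopfRaw]
  exact Prod.ext (by ring) (Prod.ext (by simp [norm_mul, hs]) rfl)

/-- The orbit space `S⁵ / Circle` is homeomorphic to `S⁴ ⊂ ℂ × ℝ × ℂ`, in a way such that the
induced actions `s · (v, w, z) = (s v, w, s z)` and `s · (v, w, z) = (s v, w, z)` correspond to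
`s · (a, h, c) = (s a, h, s c)` and `s · (a, h, c) = (s a, h, c)` respectively. -/
theorem orbit_space_S5_circle_homeo_S4 :
    ∃ Φ : Quot orbitRelS5 ≃ₜ SphereCRC,
      ∀ (s : Circle) (x : SphereC3),
        (Φ (Quot.mk orbitRelS5 (actFirstThird s x))).val =
          ((s : ℂ) * (Φ (Quot.mk orbitRelS5 x)).val.1,
            (Φ (Quot.mk orbitRelS5 x)).val.2.1,
            (s : ℂ) * (Φ (Quot.mk orbitRelS5 x)).val.2.2) ∧
        (Φ (Quot.mk orbitRelS5 (actFirst s x))).val =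
          ((s : ℂ) * (Φ (Quot.mk orbitRelS5 x)).val.1,
            (Φ (Quot.mk orbitRelS5 x)).val.2.1,
            (Φ (Quot.mk orbitRelS5 x)).val.2.2) := by
  set e : Quot orbitRelS5 → SphereCRC := Quot.lift hopfMap hopfMap_const with he
  have hbij : Function.Bijective e := by
    constructor
    · rintro ⟨x⟩ ⟨y⟩ hxy
      exact Quot.sound (hopfMap_inj x y hxy)
    · intro q
      obtain ⟨x, hx⟩ := hopfMap_surj q
      exact ⟨Quot.mk _ x, hx⟩
  have hcont : Continuous e := continuous_quot_lift _ hopfMap_cont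
  refine ⟨hcont.homeoOfEquivCompactToT2 (f := Equiv.ofBijective e hbij), fun s x => ?_⟩
  have hΦ : ∀ y : SphereC3,
      (hcont.homeoOfEquivCompactToT2 (f := Equiv.ofBijective e hbij))
        (Quot.mk orbitRelS5 y) = hopfMap y := fun y => rfl
  rw [hΦ, hΦ, hΦ]
  exact ⟨hopfMap_actFirstThird s x, hopfMap_actFirst s x⟩
end

section
/- Let S⁷ be the unit sphere in ℍ² (ℍ the quaternions) and let the group Sp(1) of unit quaternions act on S⁷ on the right by (p,q)·u = (pu, qu). The group Circle of unit complex numbers, viewed inside ℍ, acts on S⁷ on the left by s·(p,q) = (sp, sq); this action commutes with the Sp(1)-action and hence descends to a continuous action on the orbit space S⁷/Sp(1). There is a homeomorphism Φ from S⁷/Sp(1) to the unit sphere S⁴ = {(v,w,h) ∈ ℂ×ℂ×ℝ : |v|²+|w|²+h² = 1} such that Φ(s·x) = (s²v, w, h) whenever Φ(x) = (v,w,h), for all s ∈ Circle and all x ∈ S⁷/Sp(1). -/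
open Quaternion

/-- The standard embedding `ℂ ⊂ ℍ` of the complex numbers into the quaternions. -/
def Complex.toQuat (z : ℂ) : ℍ[ℝ] := ⟨z.re, z.im, 0, 0⟩

lemma Complex.norm_toQuat (z : ℂ) : ‖z.toQuat‖ = ‖z‖ := by
  have h : Quaternion.normSq z.toQuat = Complex.normSq z := by
    rw [Quaternion.normSq_def']; simp [Complex.toQuat, Complex.normSq_apply]; ring
  have h1 : ‖z.toQuat‖ * ‖z.toQuat‖ = ‖z‖ * ‖z‖ := by
    rw [← Quaternion.normSq_eq_norm_mul_self, h, Complex.normSq_eq_norm_sq, sq]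
  nlinarith [norm_nonneg z.toQuat, norm_nonneg z]

/-- `Sp(1)`: the multiplicative group of quaternions of norm `1`. -/
abbrev Sp1 : Type := {u : ℍ[ℝ] // ‖u‖ = 1}

/-- The unit sphere `S⁷ ⊂ ℍ²`. -/
abbrev SphereH2 : Type := {p : ℍ[ℝ] × ℍ[ℝ] // ‖p.1‖ ^ 2 + ‖p.2‖ ^ 2 = 1}

/-- The unit sphere `S⁴ ⊂ ℂ × ℂ × ℝ`. -/
abbrev SphereCCR : Type := {q : ℂ × ℂ × ℝ // ‖q.1‖ ^ 2 + ‖q.2.1‖ ^ 2 + q.2.2 ^ 2 = 1}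

/-- The orbit relation on `S⁷` of the right `Sp(1)`-action `(p, q) · u = (p u, q u)`. -/
def orbitRelSp1 (x y : SphereH2) : Prop :=
  ∃ u : Sp1, (x.val.1 * u.val, x.val.2 * u.val) = y.val

/-- The left `Circle`-action `s · (p, q) = (s p, s q)` on `S⁷ ⊂ ℍ²`, with `Circle ⊂ ℂ ⊂ ℍ`.
It commutes with the right `Sp(1)`-action, hence descends to the orbit space. -/
noncomputable def circleAct (s : Circle) (x : SphereH2) : SphereH2 :=
  ⟨((s : ℂ).toQuat * x.val.1, (s : ℂ).toQuat * x.val.2), by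
    have h := x.property
    have hs : ‖(s : ℂ).toQuat‖ = 1 := by rw [Complex.norm_toQuat]; exact Circle.norm_coe s
    simp only [norm_mul, hs, one_mul]
    exact h⟩

-- auxiliary
def toC1 (x : ℍ[ℝ]) : ℂ := ⟨x.re, x.imI⟩
def toC2 (x : ℍ[ℝ]) : ℂ := ⟨x.imJ, x.imK⟩

lemma quat_eq_of_toC (a b : ℍ[ℝ]) (h1 : toC1 a = toC1 b) (h2 : toC2 a = toC2 b) : a = b := by
  simp only [toC1, toC2, Complex.mk.injEq] at h1 h2
  ext <;> tauto

lemma normsplit (m : ℍ[ℝ]) : ‖toC1 m‖^2 + ‖toC2 m‖^2 = ‖m‖^2 := by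
  have h1 : ‖m‖^2 = Quaternion.normSq m := by
    rw [sq, ← Quaternion.normSq_eq_norm_mul_self]
  have h2 : ∀ z : ℂ, ‖z‖^2 = Complex.normSq z := fun z => by
    rw [Complex.sq_norm]
  rw [h1, h2, h2, Quaternion.normSq_def']
  simp [toC1, toC2, Complex.normSq_apply]; ring

lemma conj_act (s : Circle) (m : ℍ[ℝ]) :
    toC1 ((s:ℂ).toQuat * m * star (s:ℂ).toQuat) = toC1 m ∧
    toC2 ((s:ℂ).toQuat * m * star (s:ℂ).toQuat) = (s:ℂ)^2 * toC2 m := by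
  have hs : (s:ℂ).re^2 + (s:ℂ).im^2 = 1 := by
    nlinarith [Complex.sq_norm (s:ℂ), Complex.normSq_apply (s:ℂ), Circle.norm_coe s]
  refine ⟨Complex.ext ?_ ?_, Complex.ext ?_ ?_⟩ <;>
    simp only [toC1, toC2, Quaternion.re_mul, Quaternion.imI_mul,
      Quaternion.imJ_mul, Quaternion.imK_mul, Complex.mul_re, Complex.mul_im, sq,
      Quaternion.re_star, Quaternion.imI_star, Quaternion.imJ_star, Quaternion.imK_star]
  all_goals simp only [Complex.toQuat]
  all_goals set a := (s:ℂ).re with ha; set b := (s:ℂ).im with hb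
  · linear_combination m.re * hs
  · linear_combination m.imI * hs
  · ring_nf
  · ring_nf

noncomputable def hopfFun (p : ℍ[ℝ] × ℍ[ℝ]) : ℂ × ℂ × ℝ :=
  (toC2 (2 * (p.1 * star p.2)), toC1 (2 * (p.1 * star p.2)), ‖p.1‖^2 - ‖p.2‖^2)

lemma coe_two : ((2:ℝ):ℍ[ℝ]) = 2 := by
  rw [show (2:ℝ) = 1 + 1 by norm_num, Quaternion.coe_add, Quaternion.coe_one]
  norm_num

lemma two_ne_zero_quat : (2:ℍ[ℝ]) ≠ 0 := by
  rw [← coe_two]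
  intro hcon
  have : (2:ℝ) = 0 := by
    have := congrArg QuaternionAlgebra.re hcon
    simpa using this
  norm_num at this

lemma norm_two_mul (z : ℍ[ℝ]) : ‖2 * z‖ = 2 * ‖z‖ := by
  rw [norm_mul, ← coe_two, Quaternion.norm_coe]
  norm_num

lemma hopf_mem (x : SphereH2) :
    ‖(hopfFun x.val).1‖^2 + ‖(hopfFun x.val).2.1‖^2 + (hopfFun x.val).2.2^2 = 1 := by
  obtain ⟨⟨p, q⟩, hx⟩ := x
  simp only [hopfFun]
  have h1 := normsplit (2 * (p * star q))
  have h2 : ‖2 * (p * star q)‖ = 2 * (‖p‖ * ‖q‖) := by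
    rw [norm_two_mul, norm_mul, Quaternion.norm_star]
  rw [h2] at h1
  simp only at hx ⊢
  nlinarith [h1, hx]

noncomputable def hopf (x : SphereH2) : SphereCCR := ⟨hopfFun x.val, hopf_mem x⟩

lemma norm_sq_coe (u : ℍ[ℝ]) (h : ‖u‖ = 1) : u * star u = 1 := by
  rw [Quaternion.self_mul_star]
  have : Quaternion.normSq u = 1 := by
    rw [Quaternion.normSq_eq_norm_mul_self, h]; norm_num
  rw [this]; norm_num

lemma hopf_respects (x y : SphereH2) (h : orbitRelSp1 x y) : hopf x = hopf y := by
  obtain ⟨⟨u, hu⟩, huv⟩ := h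
  obtain ⟨⟨p, q⟩, hx⟩ := x
  obtain ⟨⟨p', q'⟩, hy⟩ := y
  simp only [Prod.mk.injEq] at huv
  obtain ⟨h1, h2⟩ := huv
  apply Subtype.ext
  simp only [hopf, hopfFun]
  have key : (p * u) * star (q * u) = p * star q := by
    rw [star_mul, show p * u * (star u * star q) = p * (u * star u) * star q by
        simp [mul_assoc], norm_sq_coe u hu, mul_one]
  have hn1 : ‖p * u‖ = ‖p‖ := by rw [norm_mul, hu, mul_one]
  have hn2 : ‖q * u‖ = ‖q‖ := by rw [norm_mul, hu, mul_one]
  simp only [← h1, ← h2, key, hn1, hn2]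

lemma star_mul_self_norm (u : ℍ[ℝ]) : star u * u = ((‖u‖^2 : ℝ) : ℍ[ℝ]) := by
  rw [Quaternion.star_mul_self, Quaternion.normSq_eq_norm_mul_self, sq]

lemma mul_star_self_norm (u : ℍ[ℝ]) : u * star u = ((‖u‖^2 : ℝ) : ℍ[ℝ]) := by
  rw [Quaternion.self_mul_star, Quaternion.normSq_eq_norm_mul_self, sq]

lemma hopf_inj (x y : SphereH2) (h : hopf x = hopf y) : orbitRelSp1 x y := by
  obtain ⟨⟨p, q⟩, hx⟩ := x
  obtain ⟨⟨p', q'⟩, hy⟩ := y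
  simp only [hopf, hopfFun, Subtype.mk.injEq, Prod.mk.injEq] at h
  obtain ⟨h2, h1, h3⟩ := h
  simp only at hx hy
  have hm : p * star q = p' * star q' := by
    have hq := quat_eq_of_toC _ _ h1 h2
    exact mul_left_cancel₀ two_ne_zero_quat hq
  have hqn : ‖q‖ = ‖q'‖ := by
    have hsq : ‖q‖^2 = ‖q'‖^2 := by linarith
    nlinarith [norm_nonneg q, norm_nonneg q']
  have hpn : ‖p‖ = ‖p'‖ := by
    have hsq : ‖p‖^2 = ‖p'‖^2 := by linarith
    nlinarith [norm_nonneg p, norm_nonneg p']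
  by_cases hq0 : q = 0
  · have hq'0 : q' = 0 := by
      rw [← norm_eq_zero, ← hqn, hq0, norm_zero]
    have hp1 : ‖p‖ = 1 := by
      rw [hq0, norm_zero] at hx
      nlinarith [norm_nonneg p, hx]
    have hp'1 : ‖p'‖ = 1 := by rw [← hpn]; exact hp1
    refine ⟨⟨star p * p', by rw [norm_mul, Quaternion.norm_star, hp1, hp'1]; norm_num⟩, ?_⟩
    simp only [hq0, hq'0, zero_mul, Prod.mk.injEq]
    constructor
    · rw [← mul_assoc, mul_star_self_norm, hp1]
      norm_num
    · trivial
  · have hqpos : (0:ℝ) < ‖q‖ := norm_pos_iff.mpr hq0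
    have hne : ‖q‖ ≠ 0 := ne_of_gt hqpos
    refine ⟨⟨(‖q‖^2)⁻¹ • (star q * q'), ?_⟩, ?_⟩
    · rw [norm_smul, norm_mul, Quaternion.norm_star, ← hqn, Real.norm_eq_abs,
        abs_of_pos (inv_pos.mpr (pow_pos hqpos 2))]
      field_simp [sq]
    · simp only [Prod.mk.injEq]
      constructor
      · rw [mul_smul_comm, ← mul_assoc, hm, mul_assoc, star_mul_self_norm, ← hqn,
          Quaternion.mul_coe_eq_smul, smul_smul, inv_mul_cancel₀ (pow_pos hqpos 2).ne', one_smul]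
      · rw [mul_smul_comm, ← mul_assoc, mul_star_self_norm,
          Quaternion.coe_mul_eq_smul, smul_smul, inv_mul_cancel₀ (pow_pos hqpos 2).ne', one_smul]

lemma hopf_surj : Function.Surjective hopf := by
  rintro ⟨⟨v, w, h⟩, hc⟩
  simp only at hc
  by_cases hh : h = 1
  · subst hh
    have hv : v = 0 := by
      rw [← norm_eq_zero]
      nlinarith [norm_nonneg v, norm_nonneg w, sq_nonneg ‖v‖, sq_nonneg ‖w‖]
    have hw : w = 0 := by
      rw [← norm_eq_zero]
      nlinarith [norm_nonneg v, norm_nonneg w, sq_nonneg ‖v‖, sq_nonneg ‖w‖]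
    refine ⟨⟨(1, 0), by simp⟩, ?_⟩
    apply Subtype.ext
    simp only [hopf, hopfFun, star_zero, mul_zero, norm_one, norm_zero, hv, hw, Prod.mk.injEq]
    refine ⟨?_, ?_, by norm_num⟩
    · apply Complex.ext <;> simp [toC2]
    · apply Complex.ext <;> simp [toC1]
  · have hle : h < 1 := by
      rcases lt_or_ge h 1 with h' | h'
      · exact h'
      · exfalso
        have : h = 1 := by nlinarith [norm_nonneg v, norm_nonneg w, sq_nonneg ‖v‖, sq_nonneg ‖w‖]
        exact hh this
    set t : ℝ := Real.sqrt ((1-h)/2) with ht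
    have ht2 : t^2 = (1-h)/2 := Real.sq_sqrt (by linarith)
    have htpos : 0 < t := Real.sqrt_pos.mpr (by linarith)
    set m : ℍ[ℝ] := ⟨w.re, w.im, v.re, v.im⟩ with hmdef
    have hmC1 : toC1 m = w := rfl
    have hmC2 : toC2 m = v := rfl
    have hmn : ‖m‖^2 = 1 - h^2 := by
      have hns := normsplit m
      rw [hmC1, hmC2] at hns
      linarith
    set p : ℍ[ℝ] := (((2*t)⁻¹:ℝ):ℍ[ℝ]) * m with hpdef
    set q : ℍ[ℝ] := ((t:ℝ):ℍ[ℝ]) with hqdef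
    have hqn : ‖q‖ = t := by rw [hqdef, Quaternion.norm_coe, Real.norm_eq_abs, abs_of_pos htpos]
    have hpn : ‖p‖^2 = (1+h)/2 := by
      rw [hpdef, norm_mul, Quaternion.norm_coe, Real.norm_eq_abs, abs_of_pos (by positivity),
        mul_pow, hmn]
      field_simp
      nlinarith [ht2]
    have hstar : star q = q := by
      rw [hqdef]
      ext <;> simp
    have ht0 : t ≠ 0 := ne_of_gt htpos
    have key : 2 * (p * star q) = m := by
      have e1 : p * star q = ((2⁻¹:ℝ):ℍ[ℝ]) * m := by
        rw [hstar, hqdef, hpdef, mul_assoc, ← Quaternion.coe_commutes, ← mul_assoc,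
          ← Quaternion.coe_mul, show (2*t)⁻¹ * t = 2⁻¹ by field_simp]
      rw [e1, ← mul_assoc, ← coe_two, ← Quaternion.coe_mul,
        show (2:ℝ) * 2⁻¹ = 1 by norm_num, Quaternion.coe_one, one_mul]
    refine ⟨⟨(p, q), by simp only; rw [hpn, hqn, ht2]; ring⟩, ?_⟩
    apply Subtype.ext
    simp only [hopf, hopfFun, key, hmC1, hmC2, Prod.mk.injEq]
    refine ⟨trivial, trivial, ?_⟩
    rw [hpn, hqn, ht2]
    ring

lemma continuous_toC1 : Continuous toC1 := by
  have : toC1 = fun x : ℍ[ℝ] => (x.re : ℂ) + x.imI * Complex.I := by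
    funext x
    exact (Complex.mk_eq_add_mul_I _ _)
  rw [this]
  exact (Complex.continuous_ofReal.comp Quaternion.continuous_re).add
    ((Complex.continuous_ofReal.comp Quaternion.continuous_imI).mul continuous_const)

lemma continuous_toC2 : Continuous toC2 := by
  have : toC2 = fun x : ℍ[ℝ] => (x.imJ : ℂ) + x.imK * Complex.I := by
    funext x
    exact (Complex.mk_eq_add_mul_I _ _)
  rw [this]
  exact (Complex.continuous_ofReal.comp Quaternion.continuous_imJ).add
    ((Complex.continuous_ofReal.comp Quaternion.continuous_imK).mul continuous_const)

lemma continuous_hopfFun : Continuous hopfFun := by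
  unfold hopfFun
  refine Continuous.prodMk ?_ (Continuous.prodMk ?_ ?_)
  · exact continuous_toC2.comp (by fun_prop)
  · exact continuous_toC1.comp (by fun_prop)
  · fun_prop

instance : CompactSpace SphereH2 := by
  have hco : IsCompact {p : ℍ[ℝ] × ℍ[ℝ] | ‖p.1‖ ^ 2 + ‖p.2‖ ^ 2 = 1} := by
    apply Metric.isCompact_of_isClosed_isBounded
    · exact isClosed_eq (by fun_prop) continuous_const
    · rw [isBounded_iff_forall_norm_le]
      refine ⟨1, fun x hx => ?_⟩
      simp only [Set.mem_setOf_eq] at hx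
      rw [Prod.norm_def]
      apply max_le <;> nlinarith [norm_nonneg x.1, norm_nonneg x.2, sq_nonneg ‖x.1‖,
        sq_nonneg ‖x.2‖]
  exact isCompact_iff_compactSpace.mp hco

/-- There is a homeomorphism `Φ : S⁷/Sp(1) ≃ S⁴ ⊂ ℂ × ℂ × ℝ` such that
`Φ(s · x) = (s² v, w, h)` whenever `Φ(x) = (v, w, h)`, for all `s ∈ Circle` and all
`x ∈ S⁷/Sp(1)`. -/
theorem orbit_space_S7_Sp1_homeo_S4_circle_equivariant :
    ∃ Φ : Quot orbitRelSp1 ≃ₜ SphereCCR,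
      ∀ (s : Circle) (x : SphereH2),
        (Φ (Quot.mk orbitRelSp1 (circleAct s x))).val =
          ((s : ℂ) ^ 2 * (Φ (Quot.mk orbitRelSp1 x)).val.1,
            (Φ (Quot.mk orbitRelSp1 x)).val.2.1,
            (Φ (Quot.mk orbitRelSp1 x)).val.2.2) := by
  have hcont : Continuous hopf := Continuous.subtype_mk
    (continuous_hopfFun.comp continuous_subtype_val) _
  let e : Quot orbitRelSp1 ≃ SphereCCR := Equiv.ofBijective
    (Quot.lift hopf hopf_respects)
    ⟨by
      rintro ⟨x⟩ ⟨y⟩ hxy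
      exact Quot.sound (hopf_inj x y hxy),
     fun c => by
      obtain ⟨x, hx⟩ := hopf_surj c
      exact ⟨Quot.mk _ x, hx⟩⟩
  have hecont : Continuous e := continuous_quot_lift hopf_respects hcont
  refine ⟨hecont.homeoOfEquivCompactToT2, fun s x => ?_⟩
  have hΦ : ∀ y : SphereH2,
      (hecont.homeoOfEquivCompactToT2 (Quot.mk orbitRelSp1 y)) = hopf y := fun _ => rfl
  rw [hΦ, hΦ]
  obtain ⟨⟨p, q⟩, hx⟩ := x
  set sQ : ℍ[ℝ] := (s:ℂ).toQuat with hsQ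
  have hsn : ‖sQ‖ = 1 := by rw [hsQ, Complex.norm_toQuat]; exact Circle.norm_coe s
  have hkey : 2 * ((sQ * p) * star (sQ * q)) = sQ * (2 * (p * star q)) * star sQ := by
    rw [star_mul]
    noncomm_ring
  have hca := conj_act s (2 * (p * star q))
  simp only [hopf, hopfFun, circleAct, hsQ] at *
  rw [hkey, hca.1, hca.2]
  simp only [norm_mul, hsn, one_mul]
end

section
/- Let the torus T² = Circle × Circle act on the unit sphere S⁶ = {(v,w,z,h) ∈ ℂ³×ℝ : |v|²+|w|²+|z|²+h² = 1} by (s,t)·(v,w,z,h) = (stv, sw, tz, h), and let q : S⁶ → S⁶/T² be the orbit map. Let A ⊂ S⁶ be the subspace of all points (v,w,z,h) for which at least two of the complex coordinates v, w, z are zero. Then the restriction q|_A : A → S⁶/T² is null-homotopic. -/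
/-- The unit sphere `S⁶ ⊂ ℂ³ × ℝ`. -/
abbrev SphereC3R : Type :=
  {p : ℂ × ℂ × ℂ × ℝ // ‖p.1‖ ^ 2 + ‖p.2.1‖ ^ 2 + ‖p.2.2.1‖ ^ 2 + p.2.2.2 ^ 2 = 1}

/-- The defining `T² = Circle × Circle`-action `(s, t) · (v, w, z, h) = (s t v, s w, t z, h)`
on `S⁶`. -/
def actT2 (st : Circle × Circle) (x : SphereC3R) : SphereC3R :=
  ⟨((st.1 : ℂ) * (st.2 : ℂ) * x.val.1, (st.1 : ℂ) * x.val.2.1,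
      (st.2 : ℂ) * x.val.2.2.1, x.val.2.2.2), by
    have h := x.property; simpa [Circle.norm_coe, mul_pow] using h⟩

/-- The orbit relation of the `T²`-action on `S⁶`. -/
def orbitRelS6T2 (x y : SphereC3R) : Prop := ∃ st : Circle × Circle, actT2 st x = y

/-- The subspace `A ⊂ S⁶` of points `(v, w, z, h)` for which at least two of the complex
coordinates `v`, `w`, `z` vanish. -/
def twoCoordsZero : Set SphereC3R :=
  {x | (x.val.1 = 0 ∧ x.val.2.1 = 0) ∨ (x.val.1 = 0 ∧ x.val.2.2.1 = 0) ∨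
    (x.val.2.1 = 0 ∧ x.val.2.2.1 = 0)}

/-- The restriction `q|_A : A → S⁶/T²` of the orbit map to `A`, as a continuous map. -/
def orbitMapRestricted : C(twoCoordsZero, Quot orbitRelS6T2) :=
  ⟨fun a => Quot.mk orbitRelS6T2 a.val, continuous_quot_mk.comp continuous_subtype_val⟩

-- auxiliary
lemma circFix (v : ℂ) : ∃ u : Circle, (u:ℂ) * v = ‖v‖ := by
  by_cases h : v = 0
  · exact ⟨1, by simp [h]⟩
  · refine ⟨⟨(starRingEnd ℂ v)/‖v‖, by
      simp [Submonoid.unitSphere, mem_sphere_zero_iff_norm, norm_div, h]⟩, ?_⟩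
    have key : (starRingEnd ℂ) v * v = (‖v‖ : ℂ)^2 := by
      rw [mul_comm, Complex.mul_conj, Complex.normSq_eq_norm_sq]; push_cast; ring
    push_cast
    rw [div_mul_eq_mul_div, key]
    rw [sq]; field_simp

lemma quot_eq_norms (x : SphereC3R) (hx : x ∈ twoCoordsZero) (y : SphereC3R)
    (hy : y.val = ((‖x.val.1‖ : ℂ), (‖x.val.2.1‖ : ℂ), (‖x.val.2.2.1‖ : ℂ), x.val.2.2.2)) :
    Quot.mk orbitRelS6T2 x = Quot.mk orbitRelS6T2 y := by
  apply Quot.sound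
  simp only [twoCoordsZero, Set.mem_setOf_eq] at hx
  rcases hx with ⟨h1, h2⟩ | ⟨h1, h2⟩ | ⟨h1, h2⟩
  · -- v = 0, w = 0 : rotate z
    obtain ⟨u, hu⟩ := circFix x.val.2.2.1
    exact ⟨(1, u), Subtype.ext (by simp [actT2, hy, h1, h2, hu])⟩
  · -- v = 0, z = 0 : rotate w
    obtain ⟨u, hu⟩ := circFix x.val.2.1
    exact ⟨(u, 1), Subtype.ext (by simp [actT2, hy, h1, h2, hu])⟩
  · -- w = 0, z = 0 : rotate v
    obtain ⟨u, hu⟩ := circFix x.val.1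
    exact ⟨(1, u), Subtype.ext (by simp [actT2, hy, h1, h2, hu])⟩

lemma h_sq_le (x : SphereC3R) : x.val.2.2.2 ^ 2 ≤ 1 := by
  nlinarith [x.property, sq_nonneg ‖x.val.1‖, sq_nonneg ‖x.val.2.1‖, sq_nonneg ‖x.val.2.2.1‖]

open Real in
/-- Stage 1: rotate the (single) nonzero complex magnitude into the `w` slot. -/
noncomputable def stage1 (p : unitInterval × twoCoordsZero) : SphereC3R :=
  ⟨(((‖p.2.val.val.1‖ * Real.cos ((p.1 : ℝ) * (π/2))) : ℝ),
    ((‖p.2.val.val.2.1‖ + (‖p.2.val.val.1‖ + ‖p.2.val.val.2.2.1‖)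
        * Real.sin ((p.1 : ℝ) * (π/2))) : ℝ),
    ((‖p.2.val.val.2.2.1‖ * Real.cos ((p.1 : ℝ) * (π/2))) : ℝ),
    p.2.val.val.2.2.2), by
    obtain ⟨t, x⟩ := p
    have hx := x.2
    simp only [twoCoordsZero, Set.mem_setOf_eq] at hx
    have hp := x.1.property
    have trig := Real.sin_sq_add_cos_sq ((t : ℝ) * (π/2))
    simp only [Complex.norm_real, Real.norm_eq_abs, sq_abs]
    rcases hx with ⟨h1, h2⟩ | ⟨h1, h2⟩ | ⟨h1, h2⟩ <;>
      simp only [h1, h2, norm_zero, zero_add, add_zero, zero_mul, mul_zero] at hp ⊢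
    · linear_combination ‖x.val.val.2.2.1‖ ^ 2 * trig + hp
    · linear_combination hp
    · linear_combination ‖x.val.val.1‖ ^ 2 * trig + hp⟩

noncomputable def midMap (x : twoCoordsZero) : SphereC3R :=
  ⟨((0 : ℂ), ((Real.sqrt (1 - x.val.val.2.2.2 ^ 2)) : ℝ), (0 : ℂ), x.val.val.2.2.2), by
    have key : (0:ℝ) ≤ 1 - x.val.val.2.2.2 ^ 2 := by linarith [h_sq_le x.val]
    simp only [norm_zero, Complex.norm_real, Real.norm_eq_abs, sq_abs, Real.sq_sqrt key]
    ring⟩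

open Real in
/-- Stage 2: slide along the arc to the north pole. -/
noncomputable def stage2 (p : unitInterval × twoCoordsZero) : SphereC3R :=
  ⟨((0 : ℂ),
    ((Real.sqrt (1 - ((1 - (p.1 : ℝ)) * p.2.val.val.2.2.2 + (p.1 : ℝ)) ^ 2)) : ℝ),
    (0 : ℂ),
    (1 - (p.1 : ℝ)) * p.2.val.val.2.2.2 + (p.1 : ℝ)), by
    obtain ⟨t, x⟩ := p
    set h : ℝ := x.val.val.2.2.2 with hh
    have hb := h_sq_le x.val
    have ht0 : (0:ℝ) ≤ (t:ℝ) := t.2.1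
    have ht1 : (t:ℝ) ≤ 1 := t.2.2
    have hhl : (-1:ℝ) ≤ h := by nlinarith [sq_nonneg (h+1)]
    have hhu : h ≤ 1 := by nlinarith [sq_nonneg (h-1)]
    have e1 : (0:ℝ) ≤ (1 - (t:ℝ)) * (1 - h) := by nlinarith
    have e2 : (0:ℝ) ≤ (1 - (t:ℝ)) * (1 + h) + 2 * (t:ℝ) := by nlinarith
    have key : (0:ℝ) ≤ 1 - ((1 - (t:ℝ)) * h + (t:ℝ)) ^ 2 := by
      have : 1 - ((1 - (t:ℝ)) * h + (t:ℝ)) ^ 2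
          = ((1 - (t:ℝ)) * (1 - h)) * ((1 - (t:ℝ)) * (1 + h) + 2 * (t:ℝ)) := by ring
      rw [this]; exact mul_nonneg e1 e2
    simp only [norm_zero, Complex.norm_real, Real.norm_eq_abs, sq_abs, Real.sq_sqrt key]
    ring⟩

lemma stage1_cont : Continuous stage1 := by
  apply Continuous.subtype_mk
  fun_prop

lemma stage2_cont : Continuous stage2 := by
  apply Continuous.subtype_mk
  fun_prop

lemma sum_norms_eq (x : twoCoordsZero) :
    ‖x.val.val.2.1‖ + (‖x.val.val.1‖ + ‖x.val.val.2.2.1‖)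
      = Real.sqrt (1 - x.val.val.2.2.2 ^ 2) := by
  have hx := x.2
  simp only [twoCoordsZero, Set.mem_setOf_eq] at hx
  have hp := x.1.property
  rcases hx with ⟨h1, h2⟩ | ⟨h1, h2⟩ | ⟨h1, h2⟩ <;>
    simp only [h1, h2, norm_zero, add_zero, zero_add]
  · rw [show (1 : ℝ) - x.val.val.2.2.2 ^ 2 = ‖x.val.val.2.2.1‖ ^ 2 by
      simp only [h1, h2, norm_zero] at hp; nlinarith]
    exact (Real.sqrt_sq (norm_nonneg _)).symm
  · rw [show (1 : ℝ) - x.val.val.2.2.2 ^ 2 = ‖x.val.val.2.1‖ ^ 2 by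
      simp only [h1, h2, norm_zero] at hp; nlinarith]
    exact (Real.sqrt_sq (norm_nonneg _)).symm
  · rw [show (1 : ℝ) - x.val.val.2.2.2 ^ 2 = ‖x.val.val.1‖ ^ 2 by
      simp only [h1, h2, norm_zero] at hp; nlinarith]
    exact (Real.sqrt_sq (norm_nonneg _)).symm

noncomputable def midCM : C(twoCoordsZero, Quot orbitRelS6T2) :=
  ⟨fun x => Quot.mk orbitRelS6T2 (midMap x), by
    apply continuous_quot_mk.comp
    apply Continuous.subtype_mk
    fun_prop⟩

noncomputable def homot1 : orbitMapRestricted.Homotopy midCM where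
  toFun := fun p => Quot.mk orbitRelS6T2 (stage1 p)
  continuous_toFun := continuous_quot_mk.comp stage1_cont
  map_zero_left := by
    intro x
    show Quot.mk orbitRelS6T2 (stage1 (0, x)) = Quot.mk orbitRelS6T2 x.val
    refine (quot_eq_norms x.val x.2 (stage1 (0, x)) ?_).symm
    show ((((‖x.val.val.1‖ * Real.cos (((0 : unitInterval) : ℝ) * (Real.pi/2))) : ℝ) : ℂ), _, _, _)
      = _
    norm_num
  map_one_left := by
    intro x
    show Quot.mk orbitRelS6T2 (stage1 (1, x)) = Quot.mk orbitRelS6T2 (midMap x)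
    refine congrArg _ (Subtype.ext ?_)
    show ((((‖x.val.val.1‖ * Real.cos (((1 : unitInterval) : ℝ) * (Real.pi/2))) : ℝ) : ℂ), _, _, _)
      = _
    simp only [midMap, Set.Icc.coe_one, one_mul, Real.cos_pi_div_two, Real.sin_pi_div_two,
      mul_zero, mul_one, Complex.ofReal_zero]
    rw [sum_norms_eq x]

noncomputable def homot2 : midCM.Homotopy (ContinuousMap.const _ (Quot.mk orbitRelS6T2
    ⟨((0:ℂ), (0:ℂ), (0:ℂ), (1:ℝ)), by norm_num⟩)) where
  toFun := fun p => Quot.mk orbitRelS6T2 (stage2 p)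
  continuous_toFun := continuous_quot_mk.comp stage2_cont
  map_zero_left := by
    intro x
    refine congrArg (Quot.mk _) (Subtype.ext ?_)
    show (((0:ℝ) : ℂ), (((Real.sqrt (1 - ((1 - ((0 : unitInterval) : ℝ)) * x.val.val.2.2.2
        + ((0 : unitInterval) : ℝ)) ^ 2)) : ℝ) : ℂ), _, _) = _
    norm_num [midMap]
  map_one_left := by
    intro x
    refine congrArg (Quot.mk _) (Subtype.ext ?_)
    show (((0:ℝ) : ℂ), (((Real.sqrt (1 - ((1 - ((1 : unitInterval) : ℝ)) * x.val.val.2.2.2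
        + ((1 : unitInterval) : ℝ)) ^ 2)) : ℝ) : ℂ), _, _) = _
    norm_num


/-- The restriction of the orbit map `q : S⁶ → S⁶/T²` to the subspace `A` of points with at
least two vanishing complex coordinates is null-homotopic. -/
theorem orbit_map_restricted_nullhomotopic : orbitMapRestricted.Nullhomotopic := by
  exact ⟨Quot.mk orbitRelS6T2 ⟨((0:ℂ), (0:ℂ), (0:ℂ), (1:ℝ)), by norm_num⟩,
    (ContinuousMap.Homotopic.trans ⟨homot1⟩ ⟨homot2⟩)⟩
end
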